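/- Let X be a finite set, n ≥ 1, let k : X → ℕ satisfy ∑_a k(a) = n, and let m : X × X → ℕ satisfy ∑_b m(a,b) = k(a) for every a and ∑_a m(a,b) = k(b) for every b. Let c ∈ X^n be a sequence of composition k. Then the number of sequences x̄ ∈ X^n of composition k such that c has conditional composition m from x̄ equals ∏_{b ∈ X} k(b)! divided by ∏_{a,b ∈ X} m(a,b)!. -/

import Mathlib

open Finset Equiv

lemma existsPermComp {α ι : Type*} [Fintype α] [DecidableEq α] [DecidableEq ι]
    (f g : α → ι) (h : ∀ i, Fintype.card {a // f a = i} = Fintype.card {a // g a = i}) :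
    ∃ σ : Equiv.Perm α, ∀ a, f (σ a) = g a := by
  have e : ∀ i, {a // g a = i} ≃ {a // f a = i} := fun i => (Fintype.equivOfCardEq (h i)).symm
  refine ⟨(Equiv.sigmaFiberEquiv g).symm.trans ((Equiv.sigmaCongrRight e).trans
    (Equiv.sigmaFiberEquiv f)), fun a => ?_⟩
  exact ((e (g a)) ⟨a, rfl⟩).prop

lemma existsCompFun {ι : Type*} [Fintype ι] [DecidableEq ι] (n : ℕ) (k : ι → ℕ)
    (hk : ∑ a, k a = n) : ∃ f : Fin n → ι, ∀ a, Fintype.card {i // f i = a} = k a := by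
  have hcard : Fintype.card (Σ a : ι, Fin (k a)) = n := by simp [hk]
  let e := Fintype.equivFinOfCardEq hcard
  refine ⟨fun i => (e.symm i).1, fun a => ?_⟩
  have h1 : {i : Fin n // (e.symm i).1 = a} ≃ {x : Σ b : ι, Fin (k b) // x.1 = a} :=
    (e.symm.subtypeEquiv (fun i => Iff.rfl))
  have h2 : {x : Σ b : ι, Fin (k b) // x.1 = a} ≃ Fin (k a) :=
    { toFun := fun x => Fin.cast (congrArg k x.2) x.1.2
      invFun := fun j => ⟨⟨a, j⟩, rfl⟩
      left_inv := fun x => by rcases x with ⟨⟨b, j⟩, h⟩; subst h; rfl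
      right_inv := fun j => rfl }
  rw [Fintype.card_congr (h1.trans h2), Fintype.card_fin]

lemma card_filter_comp_perm {α : Type*} [Fintype α] [DecidableEq α] (σ : Equiv.Perm α)
    (p : α → Prop) [DecidablePred p] :
    (univ.filter fun i => p (σ i)).card = (univ.filter fun i => p i).card := by
  rw [← Fintype.card_subtype, ← Fintype.card_subtype]
  exact Fintype.card_congr (σ.subtypeEquiv fun a => Iff.rfl)

/-- Counting sequences `x̄` of composition `k` from which a fixed sequence `c` of
composition `k` has conditional composition `mm`: there are exactly
`(∏_b k(b)!) / (∏_{a,b} m(a,b)!)` of them. -/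
theorem stmt6 {X : Type*} [Fintype X] [DecidableEq X]
    (n : ℕ) (hn : 1 ≤ n) (k : X → ℕ) (hk : ∑ a, k a = n)
    (mm : X × X → ℕ)
    (hrow : ∀ a, ∑ b, mm (a, b) = k a) (hcol : ∀ b, ∑ a, mm (a, b) = k b)
    (c : Fin n → X) (hc : ∀ a, (Finset.univ.filter fun i => c i = a).card = k a) :
    Nat.card {xbar : Fin n → X //
        (∀ a, (Finset.univ.filter fun i => xbar i = a).card = k a) ∧
        (∀ a b, (Finset.univ.filter fun i => xbar i = a ∧ c i = b).card = mm (a, b))}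
      = (∏ b, (k b).factorial) / (∏ p : X × X, (mm p).factorial) := by
  have hsum : ∑ p : X × X, mm p = n := by
    rw [Fintype.sum_prod_type]
    simpa [hrow] using hk
  obtain ⟨F, hF⟩ := existsCompFun n mm hsum
  have hsnd : ∀ b, Fintype.card {i // (F i).2 = b} = Fintype.card {i // c i = b} := by
    intro b
    rw [Fintype.card_subtype, Fintype.card_subtype, hc b,
      Finset.card_eq_sum_card_fiberwise (f := fun i => (F i).1) (t := univ)
        (fun _ _ => mem_univ _), ← hcol b]
    refine Finset.sum_congr rfl fun a _ => ?_
    rw [Finset.filter_filter, ← hF (a, b), Fintype.card_subtype]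
    congr 1
    refine Finset.filter_congr fun i _ => ?_
    simp [Prod.ext_iff, and_comm]
  obtain ⟨σ₀, hσ₀⟩ := existsPermComp (fun i => (F i).2) c hsnd
  set xbar0 : Fin n → X := fun i => (F (σ₀ i)).1 with hxbar0
  have hpair : ∀ (y : Fin n → X) (p : X × X),
      Fintype.card {i // (y i, c i) = p} = (univ.filter fun i => y i = p.1 ∧ c i = p.2).card := by
    intro y p
    rw [Fintype.card_subtype]
    congr 1
    refine Finset.filter_congr fun i _ => ?_
    simp [Prod.ext_iff]
  have cond2₀ : ∀ a b, (univ.filter fun i => xbar0 i = a ∧ c i = b).card = mm (a, b) := by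
    intro a b
    have h1 : ∀ i ∈ (univ : Finset (Fin n)),
        (xbar0 i = a ∧ c i = b) ↔ F (σ₀ i) = (a, b) := by
      intro i _
      rw [Prod.ext_iff, hxbar0]
      simp [← hσ₀ i]
    rw [Finset.filter_congr h1, card_filter_comp_perm σ₀ (fun i => F i = (a, b)),
      ← Fintype.card_subtype]
    exact hF (a, b)
  have cond1_of_cond2 : ∀ y : Fin n → X,
      (∀ a b, (univ.filter fun i => y i = a ∧ c i = b).card = mm (a, b)) →
      ∀ a, (univ.filter fun i => y i = a).card = k a := by
    intro y h2 a
    rw [Finset.card_eq_sum_card_fiberwise (f := c) (t := univ) (fun _ _ => mem_univ _),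
      ← hrow a]
    refine Finset.sum_congr rfl fun b _ => ?_
    rw [Finset.filter_filter]
    exact h2 a b
  set T := {xbar : Fin n → X //
        (∀ a, (Finset.univ.filter fun i => xbar i = a).card = k a) ∧
        (∀ a b, (Finset.univ.filter fun i => xbar i = a ∧ c i = b).card = mm (a, b))} with hT
  set G := {σ : Equiv.Perm (Fin n) // c ∘ σ = c} with hG
  set P : Fin n → X × X := fun i => (xbar0 i, c i) with hP
  set S := {σ : Equiv.Perm (Fin n) // P ∘ σ = P} with hS
  -- section
  have hsec : ∀ x : T, ∃ σ : Equiv.Perm (Fin n),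
      (∀ i, c (σ i) = c i) ∧ (∀ i, xbar0 (σ i) = x.val i) := by
    intro x
    have hfib : ∀ p : X × X, Fintype.card {i // (xbar0 i, c i) = p}
        = Fintype.card {i // (x.val i, c i) = p} := by
      intro p
      rw [hpair, hpair, cond2₀ p.1 p.2, x.prop.2 p.1 p.2]
    obtain ⟨σ, hσ⟩ := existsPermComp (fun i => (xbar0 i, c i)) (fun i => (x.val i, c i)) hfib
    exact ⟨σ, fun i => congrArg Prod.snd (hσ i), fun i => congrArg Prod.fst (hσ i)⟩
  choose s hs1 hs2 using hsec
  -- map G → T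
  have memT : ∀ σ : G,
      (∀ a, (univ.filter fun i => (xbar0 ∘ σ.val) i = a).card = k a) ∧
      (∀ a b, (univ.filter fun i => (xbar0 ∘ σ.val) i = a ∧ c i = b).card = mm (a, b)) := by
    intro σ
    have h2 : ∀ a b,
        (univ.filter fun i => (xbar0 ∘ σ.val) i = a ∧ c i = b).card = mm (a, b) := by
      intro a b
      have hcσ : ∀ i, c (σ.val i) = c i := fun i => congrFun σ.prop i
      have h1 : ∀ i ∈ (univ : Finset (Fin n)),
          ((xbar0 ∘ σ.val) i = a ∧ c i = b) ↔ (xbar0 (σ.val i) = a ∧ c (σ.val i) = b) := by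
        intro i _
        rw [hcσ i]
        exact Iff.rfl
      rw [Finset.filter_congr h1,
        card_filter_comp_perm σ.val (fun i => xbar0 i = a ∧ c i = b)]
      exact cond2₀ a b
    exact ⟨cond1_of_cond2 _ h2, h2⟩
  let t : G → T := fun σ => ⟨xbar0 ∘ σ.val, memT σ⟩
  have hSmem : ∀ σ : G, P ∘ (σ.val * (s (t σ))⁻¹) = P := by
    intro σ
    funext i
    have hcσ : ∀ j, c (σ.val j) = c j := fun j => congrFun σ.prop j
    have hc1 : c ((s (t σ))⁻¹ i) = c i := by
      have h0 := hs1 (t σ) ((s (t σ))⁻¹ i)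
      rw [Equiv.Perm.inv_def, Equiv.apply_symm_apply] at h0
      exact h0.symm
    have hx1 : xbar0 (σ.val ((s (t σ))⁻¹ i)) = xbar0 i := by
      have h2 := hs2 (t σ) ((s (t σ))⁻¹ i)
      -- h2 : xbar0 (s (t σ) ((s (t σ))⁻¹ i)) = (t σ).val ((s (t σ))⁻¹ i)
      rw [Equiv.Perm.inv_def, Equiv.apply_symm_apply] at h2
      exact h2.symm
    show P (σ.val ((s (t σ))⁻¹ i)) = P i
    rw [hP]
    simp only
    rw [hx1, hcσ, hc1]
  have e : S × T ≃ G :=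
    { toFun := fun q =>
        ⟨q.1.val * s q.2, by
          funext i
          have h1 : c (q.1.val ((s q.2) i)) = c ((s q.2) i) :=
            congrArg Prod.snd (congrFun q.1.prop ((s q.2) i))
          show c (q.1.val ((s q.2) i)) = c i
          rw [h1, hs1]⟩
      invFun := fun σ => (⟨σ.val * (s (t σ))⁻¹, hSmem σ⟩, t σ)
      left_inv := by
        rintro ⟨τ, x⟩
        have hx : t ⟨τ.val * s x, by
            funext i
            have h1 : c (τ.val ((s x) i)) = c ((s x) i) :=
              congrArg Prod.snd (congrFun τ.prop ((s x) i))
            show c (τ.val ((s x) i)) = c i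
            rw [h1, hs1]⟩ = x := by
          apply Subtype.ext
          funext i
          show xbar0 (τ.val ((s x) i)) = x.val i
          have h1 := congrFun τ.prop ((s x) i)
          simp only [hP, Function.comp_apply, Prod.mk.injEq] at h1
          rw [h1.1, hs2]
        simp only [Prod.mk.injEq]
        constructor
        · apply Subtype.ext
          show (τ.val * s x) * (s (t _))⁻¹ = τ.val
          rw [hx, mul_inv_cancel_right]
        · exact hx
      right_inv := by
        intro σ
        apply Subtype.ext
        show (σ.val * (s (t σ))⁻¹) * s (t σ) = σ.val
        rw [inv_mul_cancel_right] }
  have cardG : Nat.card G = ∏ b, (k b).factorial := by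
    rw [hG, Nat.card_eq_fintype_card, DomMulAct.stabilizer_card c]
    exact Finset.prod_congr rfl fun b _ => by rw [Fintype.card_subtype, hc b]
  have cardS : Nat.card S = ∏ p : X × X, (mm p).factorial := by
    rw [hS, Nat.card_eq_fintype_card, DomMulAct.stabilizer_card P]
    refine Finset.prod_congr rfl fun p _ => ?_
    congr 1
    have : Fintype.card {i // P i = p} = Fintype.card {i // (xbar0 i, c i) = p} := rfl
    rw [this, hpair, cond2₀ p.1 p.2]
  have key : Nat.card G = Nat.card S * Nat.card T := by
    rw [← Nat.card_congr e, Nat.card_prod]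
  have hpos : 0 < ∏ p : X × X, (mm p).factorial :=
    Finset.prod_pos fun p _ => Nat.factorial_pos _
  refine (Nat.div_eq_of_eq_mul_left hpos ?_).symm
  rw [← cardG, key, cardS]
  exact mul_comm _ _
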